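/- Let b, M, N be positive integers, P_S, P_R, Ω_S, N_0, η > 0, and let the following mutually independent random objects be given: (i) i.i.d. quantization errors Φ_1, …, Φ_M uniform on [−π/2^b, π/2^b), so that the combined source signal at the relay's RF-chain is u^T h_S = Σ_{m=1}^{M} √Ω_S · e^{iΦ_m}; (ii) pairwise independent noises w_1, …, w_M with E[w_m] = 0 and E[|w_m|²] = N_0, combined as u^T w_R with |u_m| = 1; (iii) an M × N self-interference matrix G with pairwise independent entries of mean 0 and variance η/M, combined as u^T G v with |u_m| = |v_n| = 1. Then the SINR at the relay, γ_SR := P_S·E[|u^T h_S|²] / (E[|u^T w_R|²] + (P_R/N)·E[|u^T G v|²]), equals P_S·Ω_S·(1 + (M−1)·Q) / (N_0 + (η/M)·P_R), where Q = ((2^b/π)·sin(π/2^b))². -/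

import Mathlib

open MeasureTheory ProbabilityTheory Real

section Helpers
variable {Ωs : Type*} [MeasurableSpace Ωs] {μ : Measure Ωs}

lemma my_memLp_conj {f : Ωs → ℂ} (hf : MemLp f 2 μ) :
    MemLp (fun ω => (starRingEnd ℂ) (f ω)) 2 μ := by
  refine MemLp.of_le hf ?_ (Filter.Eventually.of_forall fun ω => ?_)
  · exact (continuous_star.comp_aestronglyMeasurable hf.1)
  · simp

lemma my_integrable_mul_conj {f g : Ωs → ℂ} (hf : MemLp f 2 μ) (hg : MemLp g 2 μ) :
    Integrable (fun ω => f ω * (starRingEnd ℂ) (g ω)) μ := by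
  have h := (my_memLp_conj hg).smul (φ := f) (r := 1) hf (hpqr := ⟨by simp [ENNReal.inv_two_add_inv_two]⟩)
  exact memLp_one_iff_integrable.mp h

lemma my_indep_integral_mul {X Y : Ωs → ℂ} (h : IndepFun X Y μ)
    (hX : Integrable X μ) (hY : Integrable Y μ) :
    ∫ ω, X ω * Y ω ∂μ = (∫ ω, X ω ∂μ) * ∫ ω, Y ω ∂μ := by
  have hXY : Integrable (fun ω => X ω * Y ω) μ := by
    have hn : IndepFun (fun ω => ‖X ω‖) (fun ω => ‖Y ω‖) μ :=
      h.comp measurable_norm measurable_norm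
    have hi : Integrable (fun ω => ‖X ω‖ * ‖Y ω‖) μ := by
      simpa [Pi.mul_def] using hn.integrable_mul hX.norm hY.norm
    exact hi.mono' (hX.1.mul hY.1) (Filter.Eventually.of_forall fun ω => by simp)
  have hrr : IndepFun (fun ω => (X ω).re) (fun ω => (Y ω).re) μ :=
    h.comp Complex.measurable_re Complex.measurable_re
  have hri : IndepFun (fun ω => (X ω).re) (fun ω => (Y ω).im) μ :=
    h.comp Complex.measurable_re Complex.measurable_im
  have hir : IndepFun (fun ω => (X ω).im) (fun ω => (Y ω).re) μ :=
    h.comp Complex.measurable_im Complex.measurable_re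
  have hii : IndepFun (fun ω => (X ω).im) (fun ω => (Y ω).im) μ :=
    h.comp Complex.measurable_im Complex.measurable_im
  have hXr : Integrable (fun ω => (X ω).re) μ := by simpa using hX.re
  have hXi : Integrable (fun ω => (X ω).im) μ := by simpa using hX.im
  have hYr : Integrable (fun ω => (Y ω).re) μ := by simpa using hY.re
  have hYi : Integrable (fun ω => (Y ω).im) μ := by simpa using hY.im
  have e1 : ∫ ω, (X ω).re * (Y ω).re ∂μ = (∫ ω, (X ω).re ∂μ) * ∫ ω, (Y ω).re ∂μ := by
    simpa [Pi.mul_def] using hrr.integral_mul_eq_mul_integral hXr.1 hYr.1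
  have e2 : ∫ ω, (X ω).re * (Y ω).im ∂μ = (∫ ω, (X ω).re ∂μ) * ∫ ω, (Y ω).im ∂μ := by
    simpa [Pi.mul_def] using hri.integral_mul_eq_mul_integral hXr.1 hYi.1
  have e3 : ∫ ω, (X ω).im * (Y ω).re ∂μ = (∫ ω, (X ω).im ∂μ) * ∫ ω, (Y ω).re ∂μ := by
    simpa [Pi.mul_def] using hir.integral_mul_eq_mul_integral hXi.1 hYr.1
  have e4 : ∫ ω, (X ω).im * (Y ω).im ∂μ = (∫ ω, (X ω).im ∂μ) * ∫ ω, (Y ω).im ∂μ := by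
    simpa [Pi.mul_def] using hii.integral_mul_eq_mul_integral hXi.1 hYi.1
  have hX' := integral_re_add_im hX
  have hY' := integral_re_add_im hY
  have hXY' := integral_re_add_im hXY
  simp only [RCLike.re_to_complex, RCLike.im_to_complex, RCLike.I_to_complex] at hX' hY' hXY'
  rw [← hX', ← hY', ← hXY']
  have hre : ∀ ω, (X ω * Y ω).re = (X ω).re * (Y ω).re - (X ω).im * (Y ω).im :=
    fun ω => Complex.mul_re _ _
  have him : ∀ ω, (X ω * Y ω).im = (X ω).re * (Y ω).im + (X ω).im * (Y ω).re :=
    fun ω => Complex.mul_im _ _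
  simp only [hre, him]
  rw [integral_sub (hrr.integrable_mul hXr hYr |>.congr (by rfl)) (hii.integrable_mul hXi hYi |>.congr (by rfl)),
    integral_add (hri.integrable_mul hXr hYi |>.congr (by rfl)) (hir.integrable_mul hXi hYr |>.congr (by rfl))]
  rw [e1, e2, e3, e4]
  push_cast
  ring_nf
  simp [Complex.I_sq]
  ring

lemma my_expect_sq {ι : Type*} [Fintype ι] (X : ι → Ωs → ℂ) (hX : ∀ i, MemLp (X i) 2 μ) :
    ∫ ω, ‖∑ i, X i ω‖ ^ 2 ∂μ =
      ∑ i, ∑ j, (∫ ω, X i ω * (starRingEnd ℂ) (X j ω) ∂μ).re := by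
  have hint : ∀ i j, Integrable (fun ω => X i ω * (starRingEnd ℂ) (X j ω)) μ :=
    fun i j => my_integrable_mul_conj (hX i) (hX j)
  have key : ∀ ω, ‖∑ i, X i ω‖ ^ 2 =
      ∑ i, ∑ j, (X i ω * (starRingEnd ℂ) (X j ω)).re := by
    intro ω
    have h1 : (∑ i, X i ω) * (starRingEnd ℂ) (∑ j, X j ω)
        = ∑ i, ∑ j, X i ω * (starRingEnd ℂ) (X j ω) := by
      rw [map_sum, Finset.sum_mul_sum]
    have h2 : ‖∑ i, X i ω‖ ^ 2
        = ((∑ i, X i ω) * (starRingEnd ℂ) (∑ j, X j ω)).re := by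
      rw [Complex.mul_conj]
      simp [Complex.sq_norm]
    rw [h2, h1, Complex.re_sum]
    exact Finset.sum_congr rfl fun i _ => (Complex.re_sum _ _)
  simp_rw [key]
  rw [integral_finset_sum _ (fun i _ => integrable_finset_sum _ (fun j _ => by
    simpa using (hint i j).re))]
  refine Finset.sum_congr rfl fun i _ => ?_
  rw [integral_finset_sum _ (fun j _ => by simpa using (hint i j).re)]
  refine Finset.sum_congr rfl fun j _ => ?_
  simpa using integral_re (hint i j)

lemma my_sum_ite {ι : Type*} [Fintype ι] [DecidableEq ι] (c d : ℝ) :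
    ∑ i : ι, ∑ j : ι, (if i = j then c else d)
      = (Fintype.card ι : ℝ) * c
        + ((Fintype.card ι : ℝ) * ((Fintype.card ι : ℝ) - 1)) * d := by
  have h : ∀ i : ι, ∑ j : ι, (if i = j then c else d)
      = c + ((Fintype.card ι : ℝ) - 1) * d := by
    intro i
    have : ∀ j : ι, (if i = j then c else d)
        = (if i = j then (c - d) else 0) + d := by
      intro j; by_cases h : i = j <;> simp [h]
    simp_rw [this]
    rw [Finset.sum_add_distrib, Finset.sum_ite_eq, Finset.sum_const]
    simp only [if_pos (Finset.mem_univ i), Finset.card_univ, nsmul_eq_mul]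
    ring
  simp_rw [h]
  rw [Finset.sum_const, Finset.card_univ, nsmul_eq_mul]
  ring

lemma my_unif_exp {b : ℕ} {f : Ωs → ℝ} (hf : Measurable f)
    (hunif : Measure.map f μ = ENNReal.ofReal ((2 : ℝ) ^ b / (2 * π)) •
        volume.restrict (Set.Ico (-(π / 2 ^ b)) (π / 2 ^ b))) :
    ∫ ω, Complex.exp (Complex.I * (f ω : ℂ)) ∂μ
      = (((2 : ℝ) ^ b / π * Real.sin (π / 2 ^ b) : ℝ) : ℂ) := by
  set a : ℝ := π / 2 ^ b with ha_def
  have ha : 0 < a := div_pos pi_pos (by positivity)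
  have hmeas : Measurable fun x : ℝ => Complex.exp (Complex.I * (x : ℂ)) :=
    (Complex.measurable_exp.comp (measurable_const.mul Complex.measurable_ofReal))
  have h0 : ∫ ω, Complex.exp (Complex.I * (f ω : ℂ)) ∂μ
      = ∫ x, Complex.exp (Complex.I * (x : ℂ)) ∂(Measure.map f μ) :=
    (integral_map hf.aemeasurable hmeas.aestronglyMeasurable).symm
  rw [h0, hunif, integral_smul_measure]
  have h1 : ∫ x in Set.Ico (-a) a, Complex.exp (Complex.I * (x : ℂ))
      = ∫ x in Set.Ioc (-a) a, Complex.exp (Complex.I * (x : ℂ)) := by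
    rw [integral_Ico_eq_integral_Ioo, integral_Ioc_eq_integral_Ioo]
  have h2 : ∫ x in Set.Ioc (-a) a, Complex.exp (Complex.I * (x : ℂ))
      = ∫ x in (-a)..a, Complex.exp (Complex.I * (x : ℂ)) :=
    (intervalIntegral.integral_of_le (by linarith)).symm
  have h3 : ∫ x in (-a)..a, Complex.exp (Complex.I * (x : ℂ))
      = (Complex.exp (Complex.I * a) - Complex.exp (Complex.I * (-a : ℝ))) / Complex.I :=
    integral_exp_mul_complex Complex.I_ne_zero
  have h4 : (Complex.exp (Complex.I * a) - Complex.exp (Complex.I * (-a : ℝ))) / Complex.I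
      = ((2 * Real.sin a : ℝ) : ℂ) := by
    rw [mul_comm Complex.I (a : ℂ), Complex.exp_mul_I]
    push_cast
    rw [mul_comm Complex.I (-(a : ℂ)), Complex.exp_mul_I, Complex.cos_neg, Complex.sin_neg]
    rw [← Complex.ofReal_sin]
    field_simp
    ring_nf
  rw [h1, h2, h3, h4]
  have hc : ((2 : ℝ) ^ b / (2 * π)) = (ENNReal.ofReal ((2 : ℝ) ^ b / (2 * π))).toReal := by
    rw [ENNReal.toReal_ofReal (by positivity)]
  rw [← hc, Complex.real_smul]
  push_cast
  have hπ : (π : ℂ) ≠ 0 := by exact_mod_cast Real.pi_ne_zero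
  field_simp

end Helpers

/-- Relay-side SINR (Eq. (19) of Theorem 1): with b-bit quantization errors `Φ_m`
i.i.d. uniform on `[-π/2^b, π/2^b)`, pairwise independent noises of power `N_0`,
and a self-interference matrix with pairwise independent zero-mean entries of
variance `η/M`, all three groups mutually independent, the SINR
`P_S·E[|uᵀh_S|²] / (E[|uᵀw_R|²] + (P_R/N)·E[|uᵀGv|²])` equals
`P_S·Ω_S·(1+(M-1)Q) / (N_0 + (η/M)·P_R)` where `Q = ((2^b/π)·sin(π/2^b))²`. -/
theorem relay_side_SINR_los
    {Ωs : Type*} [MeasurableSpace Ωs] (μ : Measure Ωs) [IsProbabilityMeasure μ]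
    (b M N : ℕ) (hb : 0 < b) (hM : 0 < M) (hN : 0 < N)
    (P_S P_R Ω_S N_0 η : ℝ)
    (hPS : 0 < P_S) (hPR : 0 < P_R) (hΩS : 0 < Ω_S) (hN0 : 0 < N_0) (hη : 0 < η)
    -- (i) quantization errors: i.i.d. uniform on [-π/2^b, π/2^b)
    (Φ : Fin M → Ωs → ℝ) (hΦmeas : ∀ m, Measurable (Φ m))
    (hΦindep : iIndepFun Φ μ)
    (hΦunif : ∀ m, Measure.map (Φ m) μ =
      ENNReal.ofReal ((2 : ℝ) ^ b / (2 * π)) •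
        volume.restrict (Set.Ico (-(π / 2 ^ b)) (π / 2 ^ b)))
    -- (ii) noises: pairwise independent, zero mean, power N_0
    (w : Fin M → Ωs → ℂ) (hwmem : ∀ m, MemLp (w m) 2 μ)
    (hwindep : ∀ m m', m ≠ m' → IndepFun (w m) (w m') μ)
    (hwmean : ∀ m, ∫ ω, w m ω ∂μ = 0)
    (hwvar : ∀ m, ∫ ω, ‖w m ω‖ ^ 2 ∂μ = N_0)
    -- unit-modulus phase-shift vectors
    (u : Fin M → ℂ) (v : Fin N → ℂ)
    (hu : ∀ m, ‖u m‖ = 1) (hv : ∀ n, ‖v n‖ = 1)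
    -- (iii) self-interference matrix: pairwise independent, zero mean, variance η/M
    (G : Fin M → Fin N → Ωs → ℂ) (hGmem : ∀ m n, MemLp (G m n) 2 μ)
    (hGindep : ∀ m n m' n', (m, n) ≠ (m', n') → IndepFun (G m n) (G m' n') μ)
    (hGmean : ∀ m n, ∫ ω, G m n ω ∂μ = 0)
    (hGvar : ∀ m n, ∫ ω, ‖G m n ω‖ ^ 2 ∂μ = η / M)
    -- the three groups are mutually independent
    (hmutual : iIndep
      (![⨆ m, MeasurableSpace.comap (Φ m) inferInstance,
         ⨆ m, MeasurableSpace.comap (w m) inferInstance,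
         ⨆ m, ⨆ n, MeasurableSpace.comap (G m n) inferInstance] : Fin 3 → MeasurableSpace Ωs)
      μ) :
    P_S * (∫ ω, ‖∑ m, (Real.sqrt Ω_S : ℂ) * Complex.exp (Complex.I * (Φ m ω : ℂ))‖ ^ 2 ∂μ) /
      ((∫ ω, ‖∑ m, u m * w m ω‖ ^ 2 ∂μ) +
        (P_R / N) * (∫ ω, ‖∑ m, ∑ n, u m * G m n ω * v n‖ ^ 2 ∂μ)) =
    P_S * Ω_S * (1 + ((M : ℝ) - 1) * ((2 : ℝ) ^ b / π * Real.sin (π / 2 ^ b)) ^ 2) /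
      (N_0 + (η / M) * P_R) := by
  have hM' : ((M : ℕ) : ℝ) ≠ 0 := Nat.cast_ne_zero.mpr hM.ne'
  have hN' : ((N : ℕ) : ℝ) ≠ 0 := Nat.cast_ne_zero.mpr hN.ne'
  set s : ℝ := (2 : ℝ) ^ b / π * Real.sin (π / 2 ^ b) with hs_def
  -- measurability and boundedness of the numerator summands
  have hXnorm : ∀ x : ℝ, ‖Complex.exp (Complex.I * (x : ℂ))‖ = 1 := by
    intro x; rw [Complex.norm_exp]; simp
  have hφcont : Continuous fun x : ℝ => (Real.sqrt Ω_S : ℂ) * Complex.exp (Complex.I * (x : ℂ)) :=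
    continuous_const.mul (Complex.continuous_exp.comp (continuous_const.mul Complex.continuous_ofReal))
  have hΦXmeas : ∀ m, Measurable
      (fun ω => (Real.sqrt Ω_S : ℂ) * Complex.exp (Complex.I * (Φ m ω : ℂ))) :=
    fun m => hφcont.measurable.comp (hΦmeas m)
  have hXmem : ∀ m, MemLp
      (fun ω => (Real.sqrt Ω_S : ℂ) * Complex.exp (Complex.I * (Φ m ω : ℂ))) 2 μ := by
    intro m
    refine MemLp.of_bound (hΦXmeas m).aestronglyMeasurable (Real.sqrt Ω_S)
      (Filter.Eventually.of_forall fun ω => ?_)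
    rw [norm_mul, hXnorm, Complex.norm_real, Real.norm_eq_abs,
      abs_of_nonneg (Real.sqrt_nonneg _), mul_one]
  have hEX : ∀ m, ∫ ω, (Real.sqrt Ω_S : ℂ) * Complex.exp (Complex.I * (Φ m ω : ℂ)) ∂μ
      = ((Real.sqrt Ω_S * s : ℝ) : ℂ) := by
    intro m
    rw [integral_const_mul, my_unif_exp (hΦmeas m) (hΦunif m), hs_def,
      ← Complex.ofReal_mul]
  -- numerator cross terms
  have hterm : ∀ m m' : Fin M,
      (∫ ω, ((Real.sqrt Ω_S : ℂ) * Complex.exp (Complex.I * (Φ m ω : ℂ))) *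
        (starRingEnd ℂ) ((Real.sqrt Ω_S : ℂ) * Complex.exp (Complex.I * (Φ m' ω : ℂ))) ∂μ).re
      = if m = m' then Ω_S else Ω_S * s ^ 2 := by
    intro m m'
    by_cases h : m = m'
    · subst h
      have hpt : ∀ ω, ((Real.sqrt Ω_S : ℂ) * Complex.exp (Complex.I * (Φ m ω : ℂ))) *
          (starRingEnd ℂ) ((Real.sqrt Ω_S : ℂ) * Complex.exp (Complex.I * (Φ m ω : ℂ)))
          = ((Ω_S : ℝ) : ℂ) := by
        intro ω
        rw [Complex.mul_conj]
        norm_cast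
        rw [Complex.normSq_eq_norm_sq, norm_mul, hXnorm, Complex.norm_real, Real.norm_eq_abs,
          abs_of_nonneg (Real.sqrt_nonneg _), mul_one, Real.sq_sqrt hΩS.le]
      simp_rw [hpt]
      rw [integral_const]
      simp
    · have hψcont : Continuous fun x : ℝ =>
          (starRingEnd ℂ) ((Real.sqrt Ω_S : ℂ) * Complex.exp (Complex.I * (x : ℂ))) :=
        continuous_star.comp hφcont
      have hind : IndepFun
          (fun ω => (Real.sqrt Ω_S : ℂ) * Complex.exp (Complex.I * (Φ m ω : ℂ)))
          (fun ω => (starRingEnd ℂ) ((Real.sqrt Ω_S : ℂ) * Complex.exp (Complex.I * (Φ m' ω : ℂ)))) μ :=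
        (hΦindep.indepFun h).comp hφcont.measurable hψcont.measurable
      rw [my_indep_integral_mul hind ((hXmem m).integrable one_le_two)
        ((my_memLp_conj (hXmem m')).integrable one_le_two)]
      have hss : Real.sqrt Ω_S * s * (Real.sqrt Ω_S * s) = Ω_S * s ^ 2 := by
        have h2 : Real.sqrt Ω_S * Real.sqrt Ω_S = Ω_S := Real.mul_self_sqrt hΩS.le
        calc Real.sqrt Ω_S * s * (Real.sqrt Ω_S * s)
            = (Real.sqrt Ω_S * Real.sqrt Ω_S) * s ^ 2 := by ring
          _ = Ω_S * s ^ 2 := by rw [h2]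
      rw [integral_conj, hEX m, hEX m', Complex.conj_ofReal, ← Complex.ofReal_mul,
        Complex.ofReal_re, if_neg h]
      exact hss
  have hnum0 := my_expect_sq (μ := μ)
    (fun m ω => (Real.sqrt Ω_S : ℂ) * Complex.exp (Complex.I * (Φ m ω : ℂ))) hXmem
  have hnum : ∫ ω, ‖∑ m, (Real.sqrt Ω_S : ℂ) *
      Complex.exp (Complex.I * (Φ m ω : ℂ))‖ ^ 2 ∂μ
      = (M : ℝ) * Ω_S + ((M : ℝ) * ((M : ℝ) - 1)) * (Ω_S * s ^ 2) := by
    rw [hnum0]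
    simp_rw [hterm]
    rw [my_sum_ite]
    simp [Fintype.card_fin]
  -- noise terms
  have hwterm : ∀ m m' : Fin M,
      (∫ ω, (u m * w m ω) * (starRingEnd ℂ) (u m' * w m' ω) ∂μ).re
      = if m = m' then N_0 else 0 := by
    intro m m'
    by_cases h : m = m'
    · subst h
      have hpt : ∀ ω, (u m * w m ω) * (starRingEnd ℂ) (u m * w m ω)
          = ((‖w m ω‖ ^ 2 : ℝ) : ℂ) := by
        intro ω
        rw [Complex.mul_conj]
        norm_cast
        rw [Complex.normSq_eq_norm_sq, norm_mul, hu, one_mul]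
      simp_rw [hpt]
      have h0 : (∫ ω, ((‖w m ω‖ ^ 2 : ℝ) : ℂ) ∂μ)
          = ((∫ ω, ‖w m ω‖ ^ 2 ∂μ : ℝ) : ℂ) := integral_ofReal
      rw [h0, hwvar]
      simp
    · have hind : IndepFun (fun ω => u m * w m ω)
          (fun ω => (starRingEnd ℂ) (u m' * w m' ω)) μ :=
        (hwindep m m' h).comp (continuous_const.mul continuous_id).measurable
          (continuous_star.comp (continuous_const.mul continuous_id)).measurable
      rw [my_indep_integral_mul hind (((hwmem m).const_mul (u m)).integrable one_le_two)
        ((my_memLp_conj ((hwmem m').const_mul (u m'))).integrable one_le_two)]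
      rw [integral_conj, integral_const_mul, integral_const_mul, hwmean, hwmean]
      simp [h]
  have hden1_0 := my_expect_sq (μ := μ) (fun m ω => u m * w m ω)
    (fun m => (hwmem m).const_mul (u m))
  have hden1 : ∫ ω, ‖∑ m, u m * w m ω‖ ^ 2 ∂μ = (M : ℝ) * N_0 := by
    rw [hden1_0]
    simp_rw [hwterm]
    rw [my_sum_ite]
    simp [Fintype.card_fin]
  -- self-interference terms
  have hZmem : ∀ p : Fin M × Fin N, MemLp (fun ω => u p.1 * G p.1 p.2 ω * v p.2) 2 μ := by
    intro p
    have h1 : (fun ω => u p.1 * G p.1 p.2 ω * v p.2)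
        = fun ω => (u p.1 * v p.2) * G p.1 p.2 ω := by funext ω; ring
    rw [h1]
    exact (hGmem p.1 p.2).const_mul _
  have hGterm : ∀ p q : Fin M × Fin N,
      (∫ ω, (u p.1 * G p.1 p.2 ω * v p.2) *
        (starRingEnd ℂ) (u q.1 * G q.1 q.2 ω * v q.2) ∂μ).re
      = if p = q then η / M else 0 := by
    intro p q
    by_cases h : p = q
    · subst h
      have hpt : ∀ ω, (u p.1 * G p.1 p.2 ω * v p.2) *
          (starRingEnd ℂ) (u p.1 * G p.1 p.2 ω * v p.2)
          = ((‖G p.1 p.2 ω‖ ^ 2 : ℝ) : ℂ) := by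
        intro ω
        rw [Complex.mul_conj]
        norm_cast
        rw [Complex.normSq_eq_norm_sq, norm_mul, norm_mul, hu, hv, one_mul, mul_one]
      simp_rw [hpt]
      have h0 : (∫ ω, ((‖G p.1 p.2 ω‖ ^ 2 : ℝ) : ℂ) ∂μ)
          = ((∫ ω, ‖G p.1 p.2 ω‖ ^ 2 ∂μ : ℝ) : ℂ) := integral_ofReal
      rw [h0, hGvar]
      simp
    · have hne : (p.1, p.2) ≠ (q.1, q.2) := by simpa using h
      have hind : IndepFun (fun ω => u p.1 * G p.1 p.2 ω * v p.2)
          (fun ω => (starRingEnd ℂ) (u q.1 * G q.1 q.2 ω * v q.2)) μ :=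
        (hGindep p.1 p.2 q.1 q.2 hne).comp
          ((continuous_const.mul continuous_id).mul continuous_const).measurable
          (continuous_star.comp ((continuous_const.mul continuous_id).mul continuous_const)).measurable
      rw [my_indep_integral_mul hind ((hZmem p).integrable one_le_two)
        ((my_memLp_conj (hZmem q)).integrable one_le_two)]
      have hz1 : ∫ ω, u p.1 * G p.1 p.2 ω * v p.2 ∂μ = 0 := by
        have h1 : (fun ω => u p.1 * G p.1 p.2 ω * v p.2)
            = fun ω => (u p.1 * v p.2) * G p.1 p.2 ω := by funext ω; ring
        rw [h1, integral_const_mul, hGmean, mul_zero]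
      have hz2 : ∫ ω, (starRingEnd ℂ) (u q.1 * G q.1 q.2 ω * v q.2) ∂μ = 0 := by
        rw [integral_conj]
        have h1 : (fun ω => u q.1 * G q.1 q.2 ω * v q.2)
            = fun ω => (u q.1 * v q.2) * G q.1 q.2 ω := by funext ω; ring
        rw [h1, integral_const_mul, hGmean, mul_zero, map_zero]
      rw [hz1, hz2]
      simp [h]
  have hden2_0 := my_expect_sq (μ := μ)
    (fun (p : Fin M × Fin N) ω => u p.1 * G p.1 p.2 ω * v p.2) hZmem
  have hden2 : ∫ ω, ‖∑ m, ∑ n, u m * G m n ω * v n‖ ^ 2 ∂μ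
      = ((M : ℝ) * (N : ℝ)) * (η / M) := by
    have hrw : ∫ ω, ‖∑ m, ∑ n, u m * G m n ω * v n‖ ^ 2 ∂μ
        = ∫ ω, ‖∑ p : Fin M × Fin N, u p.1 * G p.1 p.2 ω * v p.2‖ ^ 2 ∂μ := by
      refine integral_congr_ae (Filter.Eventually.of_forall fun ω => ?_)
      beta_reduce
      rw [Fintype.sum_prod_type]
    rw [hrw, hden2_0]
    simp_rw [hGterm]
    rw [my_sum_ite]
    simp [Fintype.card_prod, Fintype.card_fin]
  rw [hnum, hden1, hden2]
  have hd1 : 0 < (M : ℝ) * N_0 + P_R / (N : ℝ) * ((M : ℝ) * (N : ℝ) * (η / M)) := by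
    have : 0 < (M : ℝ) := by positivity
    have : 0 < (N : ℝ) := by positivity
    positivity
  have hd2 : 0 < N_0 + η / (M : ℝ) * P_R := by
    have : 0 < (M : ℝ) := by positivity
    positivity
  rw [div_eq_div_iff hd1.ne' hd2.ne']
  field_simp
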